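/- Let λ ∈ ℂ with λ ≠ 0 and λ ≠ 1, and let z ∈ ℂ with z ≠ 0, z ≠ 1, z ≠ λ. Set w = z + λ/z. Then w ≠ λ + 1 and (w² − 4λ)/(4(w − λ − 1)) = (z² − λ)²/(4·z·(z − 1)·(z − λ)). That is, the Lattès map L_λ(z) = (z² − λ)²/(4z(z−1)(z−λ)) admits the decomposition L_λ = C₁ ∘ D₁ with C₁(z) = (z² − 4λ)/(4(z − λ − 1)) and D₁(z) = z + λ/z. -/

import Mathlib

theorem stmt_8 (lam : ℂ) (h0 : lam ≠ 0) (h1 : lam ≠ 1)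
    (z : ℂ) (hz0 : z ≠ 0) (hz1 : z ≠ 1) (hzl : z ≠ lam) :
    (z + lam / z) ≠ lam + 1 ∧
    ((z + lam / z) ^ 2 - 4 * lam) / (4 * ((z + lam / z) - lam - 1)) =
      (z ^ 2 - lam) ^ 2 / (4 * z * (z - 1) * (z - lam)) := by
  have hz1' : z - 1 ≠ 0 := sub_ne_zero.mpr hz1
  have hzl' : z - lam ≠ 0 := sub_ne_zero.mpr hzl
  have key : z + lam / z - lam - 1 = (z - 1) * (z - lam) / z := by
    field_simp; ring
  have hne : z + lam / z ≠ lam + 1 := by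
    intro h
    have : z + lam / z - lam - 1 = 0 := by rw [h]; ring
    rw [key, div_eq_zero_iff] at this
    rcases this with h' | h'
    · exact (mul_ne_zero hz1' hzl') h'
    · exact hz0 h'
  refine ⟨hne, ?_⟩
  have hd : z + lam / z - lam - 1 ≠ 0 := by
    rw [key]; exact div_ne_zero (mul_ne_zero hz1' hzl') hz0
  have hnum : (z + lam / z) ^ 2 - 4 * lam = (z ^ 2 - lam) ^ 2 / z ^ 2 := by
    field_simp; ring
  rw [hnum, key]
  field_simp
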